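/- Let k : [0,1]×[0,1] → ℝ be a continuous kernel having rank at least d, i.e. k(s,t) = Σ_{m=1}^{d} λ_m φ_m(s)φ_m(t) + B(s,t) for all s,t ∈ [0,1], where λ_1,…,λ_d > 0, the functions φ_1,…,φ_d : [0,1] → ℝ are continuous and orthonormal in L²([0,1]), and B : [0,1]×[0,1] → ℝ is a continuous nonnegative-definite kernel. Then there exist points u_1 < u_2 < … < u_d in [0,1] such that the d×d matrix with entries k(u_i,u_j), 1 ≤ i,j ≤ d, is invertible. -/

import Mathlib

open MeasureTheory

section aux
variable {d : ℕ}

lemma indep_of_ortho (φ : Fin d → ℝ → ℝ)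
    (hφ : ∀ m, ContinuousOn (φ m) (Set.Icc 0 1))
    (hortho : ∀ i j, (∫ x in (0:ℝ)..1, φ i x * φ j x) = if i = j then 1 else 0)
    (c : Fin d → ℝ) (hc : ∀ x ∈ Set.Icc (0:ℝ) 1, (∑ m, c m * φ m x) = 0) :
    c = 0 := by
  funext j
  have hu : Set.uIcc (0:ℝ) 1 = Set.Icc 0 1 := Set.uIcc_of_le zero_le_one
  have hint : ∀ m : Fin d, IntervalIntegrable (fun x => c m * (φ m x * φ j x)) volume 0 1 := by
    intro m
    apply ContinuousOn.intervalIntegrable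
    rw [hu]
    exact continuousOn_const.mul ((hφ m).mul (hφ j))
  have h1 : (∫ x in (0:ℝ)..1, ∑ m, c m * (φ m x * φ j x)) =
      ∑ m, c m * ∫ x in (0:ℝ)..1, φ m x * φ j x := by
    rw [intervalIntegral.integral_finset_sum (fun m _ => hint m)]
    exact Finset.sum_congr rfl fun m _ => intervalIntegral.integral_const_mul _ _
  have h0 : (∫ x in (0:ℝ)..1, ∑ m, c m * (φ m x * φ j x)) = 0 := by
    have he : Set.EqOn (fun x => ∑ m, c m * (φ m x * φ j x)) 0 (Set.uIcc (0:ℝ) 1) := by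
      intro x hx
      rw [hu] at hx
      have h2 := hc x hx
      have : ∑ m, c m * (φ m x * φ j x) = (∑ m, c m * φ m x) * φ j x := by
        rw [Finset.sum_mul]; congr 1; funext m; ring
      simp only [Pi.zero_apply, this, h2, zero_mul]
    rw [intervalIntegral.integral_congr he]
    simp
  rw [h0] at h1
  show c j = 0
  have h2 : ∑ m, c m * (if m = j then (1:ℝ) else 0) = c j := by simp
  have h4 : (∑ m, c m * ∫ x in (0:ℝ)..1, φ m x * φ j x) =
      ∑ m, c m * (if m = j then (1:ℝ) else 0) :=
    Finset.sum_congr rfl fun m _ => by rw [hortho m j]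
  rw [h4] at h1
  rw [← h2, ← h1]

lemma exists_good_points (φ : Fin d → ℝ → ℝ)
    (hφ : ∀ m, ContinuousOn (φ m) (Set.Icc 0 1))
    (hortho : ∀ i j, (∫ x in (0:ℝ)..1, φ i x * φ j x) = if i = j then 1 else 0) :
    ∃ u : Fin d → ℝ, (∀ i, u i ∈ Set.Icc (0:ℝ) 1) ∧
      LinearIndependent ℝ (fun i : Fin d => (fun m => φ m (u i) : Fin d → ℝ)) := by
  set f : ℝ → (Fin d → ℝ) := fun x m => φ m x with hf
  set S : Set (Fin d → ℝ) := f '' Set.Icc 0 1 with hS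
  have hspan : Submodule.span ℝ S = ⊤ := by
    by_contra h
    obtain ⟨g, hg, hmap⟩ := Submodule.exists_dual_map_eq_bot_of_lt_top
      (lt_top_iff_ne_top.mpr h) inferInstance
    set c : Fin d → ℝ := fun m => g (fun j => if m = j then 1 else 0) with hcdef
    have hgv : ∀ v : Fin d → ℝ, g v = ∑ m, v m * c m := fun v => by
      simpa [smul_eq_mul] using LinearMap.pi_apply_eq_sum_univ g v
    have hczero : c = 0 := by
      apply indep_of_ortho φ hφ hortho
      intro x hx
      have hfx : f x ∈ S := ⟨x, hx, rfl⟩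
      have : g (f x) = 0 := by
        have : g (f x) ∈ Submodule.map g (Submodule.span ℝ S) :=
          Submodule.mem_map_of_mem (Submodule.subset_span hfx)
        rw [hmap] at this
        simpa using this
      rw [hgv] at this
      rw [← this]
      exact Finset.sum_congr rfl fun m _ => by simp [hf, mul_comm]
    apply hg
    apply LinearMap.ext
    intro v
    rw [hgv v]
    simp [hczero]
  obtain ⟨b, hbS, hbspan, hbind⟩ := exists_linearIndependent ℝ S
  rw [hspan] at hbspan
  have hbfin : b.Finite := hbind.setFinite
  haveI := hbfin.fintype
  have hbasis : Module.Basis b ℝ (Fin d → ℝ) :=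
    Module.Basis.mk hbind (by rw [Subtype.range_coe, hbspan])
  have hcard : Fintype.card b = d := by
    rw [← Module.finrank_eq_card_basis hbasis]
    simp
  obtain ⟨e⟩ : Nonempty (Fin d ≃ b) := ⟨(Fintype.equivFinOfCardEq hcard).symm⟩
  have hx : ∀ i : Fin d, ∃ x ∈ Set.Icc (0:ℝ) 1, f x = (e i : Fin d → ℝ) := by
    intro i
    obtain ⟨x, hx1, hx2⟩ := hbS (e i).2
    exact ⟨x, hx1, hx2⟩
  choose u hu hfu using hx
  refine ⟨u, hu, ?_⟩
  have h3 : LinearIndependent ℝ (fun i : Fin d => ((e i : Fin d → ℝ))) :=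
    hbind.comp e e.injective
  have heq : (fun i : Fin d => (fun m => φ m (u i) : Fin d → ℝ)) =
      fun i : Fin d => ((e i : Fin d → ℝ)) := funext fun i => hfu i
  rw [heq]
  exact h3

end aux

lemma quad_sum {n d : ℕ} (lam : Fin d → ℝ) (w : Fin d → Fin n → ℝ) (c : Fin n → ℝ) :
    ∑ i, c i * (∑ j, (∑ m, lam m * w m i * w m j) * c j)
      = ∑ m, lam m * (∑ i, c i * w m i)^2 := by
  have hsq : ∀ m, lam m * (∑ i, c i * w m i)^2
      = ∑ i, ∑ j, lam m * ((c i * w m i) * (c j * w m j)) := by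
    intro m
    rw [sq, Finset.sum_mul_sum, Finset.mul_sum]
    exact Finset.sum_congr rfl fun i _ => by rw [Finset.mul_sum]
  simp only [hsq, Finset.sum_mul, Finset.mul_sum]
  calc (∑ i, ∑ j, ∑ m, c i * (lam m * w m i * w m j * c j))
      = ∑ i, ∑ m, ∑ j, c i * (lam m * w m i * w m j * c j) :=
        Finset.sum_congr rfl fun i _ => Finset.sum_comm
    _ = ∑ m, ∑ i, ∑ j, c i * (lam m * w m i * w m j * c j) := Finset.sum_comm
    _ = ∑ m, ∑ i, ∑ j, lam m * ((c i * w m i) * (c j * w m j)) :=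
        Finset.sum_congr rfl fun m _ => Finset.sum_congr rfl fun i _ =>
          Finset.sum_congr rfl fun j _ => by ring

/-- A continuous kernel on `[0,1]²` of rank at least `d`
(i.e. admitting a rank-`d` Mercer decomposition with a continuous nonnegative-definite
remainder) admits points `u₁ < … < u_d` in `[0,1]` at which the evaluation matrix
`(k(uᵢ,uⱼ))` is invertible. -/
theorem exists_points_eval_matrix_det_ne_zero
    (d : ℕ) (k B : ℝ → ℝ → ℝ) (lam : Fin d → ℝ) (φ : Fin d → ℝ → ℝ)
    (hk : ContinuousOn (fun p : ℝ × ℝ => k p.1 p.2) (Set.Icc 0 1 ×ˢ Set.Icc 0 1))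
    (hlam : ∀ m, 0 < lam m)
    (hφ : ∀ m, ContinuousOn (φ m) (Set.Icc 0 1))
    (hortho : ∀ i j, (∫ x in (0:ℝ)..1, φ i x * φ j x) = if i = j then 1 else 0)
    (hB : ContinuousOn (fun p : ℝ × ℝ => B p.1 p.2) (Set.Icc 0 1 ×ˢ Set.Icc 0 1))
    (hBpsd : ∀ (n : ℕ) (s : Fin n → ℝ), (∀ i, s i ∈ Set.Icc (0:ℝ) 1) →
      (Matrix.of fun i j => B (s i) (s j)).PosSemidef)
    (hdecomp : ∀ s ∈ Set.Icc (0:ℝ) 1, ∀ t ∈ Set.Icc (0:ℝ) 1,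
      k s t = (∑ m, lam m * φ m s * φ m t) + B s t) :
    ∃ u : Fin d → ℝ, (∀ i, u i ∈ Set.Icc (0:ℝ) 1) ∧ StrictMono u ∧
      (Matrix.of fun i j => k (u i) (u j)).det ≠ 0 := by
  obtain ⟨x, hxI, hxind⟩ := exists_good_points φ hφ hortho
  have hfinj : Function.Injective (fun i : Fin d => (fun m => φ m (x i) : Fin d → ℝ)) :=
    hxind.injective
  have hxinj : Function.Injective x := fun i j hij => hfinj (by simp only [hij])
  set σ := Tuple.sort x with hσ
  set u := x ∘ σ with hudef
  have humono : StrictMono u :=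
    (Tuple.monotone_sort x).strictMono_of_injective (hxinj.comp σ.injective)
  have huI : ∀ i, u i ∈ Set.Icc (0:ℝ) 1 := fun i => hxI (σ i)
  have huind : LinearIndependent ℝ (fun i : Fin d => (fun m => φ m (u i) : Fin d → ℝ)) :=
    hxind.comp σ σ.injective
  have hk' : ∀ i j : Fin d, k (u i) (u j)
      = (∑ m, lam m * φ m (u i) * φ m (u j)) + B (u i) (u j) :=
    fun i j => hdecomp _ (huI i) _ (huI j)
  have hBsd := hBpsd d u huI
  -- quadratic form identity
  have key : ∀ c : Fin d → ℝ,
      dotProduct c (Matrix.mulVec (Matrix.of fun i j => k (u i) (u j)) c)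
        = (∑ m, lam m * (∑ i, c i * φ m (u i))^2)
          + dotProduct c (Matrix.mulVec (Matrix.of fun i j => B (u i) (u j)) c) := by
    intro c
    simp only [dotProduct, Matrix.mulVec, Matrix.of_apply, hk', add_mul,
      Finset.sum_add_distrib, mul_add]
    rw [← quad_sum lam (fun m i => φ m (u i)) c]
  have hPD : (Matrix.of fun i j => k (u i) (u j)).PosDef := by
    rw [Matrix.posDef_iff_dotProduct_mulVec]
    constructor
    · apply Matrix.IsHermitian.ext
      intro i j
      have hBsymm : B (u j) (u i) = B (u i) (u j) := by
        have := hBsd.1.apply i j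
        simpa using this
      simp only [Matrix.of_apply, hk' i j, hk' j i, hBsymm, star_trivial]
      congr 1
      exact Finset.sum_congr rfl fun m _ => by ring
    · intro c hc
      rw [star_trivial, key c]
      have hBnn : 0 ≤ dotProduct c (Matrix.mulVec (Matrix.of fun i j => B (u i) (u j)) c) := by
        have := hBsd.dotProduct_mulVec_nonneg c
        rwa [star_trivial] at this
      refine add_pos_of_pos_of_nonneg ?_ hBnn
      -- exists m with sum ≠ 0
      have hm : ∃ m, (∑ i, c i * φ m (u i)) ≠ 0 := by
        by_contra hno
        push_neg at hno
        apply hc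
        have hzero : (∑ i, c i • (fun m => φ m (u i) : Fin d → ℝ)) = 0 := by
          funext m
          simpa [Finset.sum_apply] using hno m
        exact funext (Fintype.linearIndependent_iff.mp huind c hzero)
      obtain ⟨m₀, hm₀⟩ := hm
      refine Finset.sum_pos' (fun m _ => ?_) ⟨m₀, Finset.mem_univ m₀, ?_⟩
      · have := (hlam m).le
        positivity
      · have := hlam m₀
        positivity
  exact ⟨u, huI, humono, hPD.det_pos.ne'⟩
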